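/- Along any solution of the covered Duffing dynamics, with x₁ = x²−y², y₁ = 2xy and θ defined by tan θ = y₁/(x₁ − 1), the derivative of θ with respect to t equals −2(x⁶ + x⁴y² − 2x⁴ + y⁴ + x² + y²)/(x⁴ + 2x²y² + y⁴ − 2x² + 2y² + 1), whenever (x₁, y₁) ≠ (1, 0). -/

import Mathlib

/-- Along solutions of the conservative Duffing system, the polar angle θ
around `(1,0)` in the `(x₁,y₁)` plane (with `x₁ = x²−y²`, `y₁ = 2xy`)
has derivative `−2N/D`. -/
theorem theta_derivative (x y ρ θ θ' : ℝ → ℝ)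
    (hx : ∀ t, HasDerivAt x (y t) t)
    (hy : ∀ t, HasDerivAt y (x t - (x t) ^ 3) t)
    (hρ : ∀ t, 0 < ρ t)
    (hpolar : ∀ t, ((x t) ^ 2 - (y t) ^ 2 - 1 = ρ t * Real.cos (θ t)) ∧
      (2 * x t * y t = ρ t * Real.sin (θ t)))
    (hθ : ∀ t, HasDerivAt θ (θ' t) t) :
    ∀ t, θ' t =
      -2 * ((x t) ^ 6 + (x t) ^ 4 * (y t) ^ 2 - 2 * (x t) ^ 4 + (y t) ^ 4
          + (x t) ^ 2 + (y t) ^ 2)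
        / ((x t) ^ 4 + 2 * (x t) ^ 2 * (y t) ^ 2 + (y t) ^ 4
          - 2 * (x t) ^ 2 + 2 * (y t) ^ 2 + 1) := by
  intro t
  obtain ⟨h1, h2⟩ := hpolar t
  have hU : HasDerivAt (fun s => (x s) ^ 2 - (y s) ^ 2 - 1)
      (2 * (x t) ^ 3 * (y t)) t := by
    have h := (((hx t).pow 2).sub ((hy t).pow 2)).sub_const 1
    exact h.congr_deriv (by norm_num; ring)
  have hV : HasDerivAt (fun s => 2 * x s * y s)
      (2 * (y t) ^ 2 + 2 * (x t) ^ 2 - 2 * (x t) ^ 4) t := by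
    have h := ((hx t).const_mul 2).mul (hy t)
    exact h.congr_deriv (by norm_num; ring)
  have hsq : ∀ s, (ρ s) ^ 2 = ((x s) ^ 2 - (y s) ^ 2 - 1) ^ 2 + (2 * x s * y s) ^ 2 := by
    intro s
    obtain ⟨a1, a2⟩ := hpolar s
    rw [a1, a2]
    nlinarith [Real.sin_sq_add_cos_sq (θ s)]
  have hρeq : ρ = fun s =>
      Real.sqrt (((x s) ^ 2 - (y s) ^ 2 - 1) ^ 2 + (2 * x s * y s) ^ 2) := by
    funext s
    rw [← hsq s, Real.sqrt_sq (hρ s).le]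
  have hf : HasDerivAt
      (fun s => ((x s) ^ 2 - (y s) ^ 2 - 1) ^ 2 + (2 * x s * y s) ^ 2)
      (2 * ((x t) ^ 2 - (y t) ^ 2 - 1) * (2 * (x t) ^ 3 * (y t))
        + 2 * (2 * x t * y t) * (2 * (y t) ^ 2 + 2 * (x t) ^ 2 - 2 * (x t) ^ 4)) t := by
    have h := (hU.pow 2).add (hV.pow 2)
    exact h.congr_deriv (by norm_num)
  have hne : ((x t) ^ 2 - (y t) ^ 2 - 1) ^ 2 + (2 * x t * y t) ^ 2 ≠ 0 := by
    rw [← hsq t]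
    exact pow_ne_zero 2 (hρ t).ne'
  obtain ⟨rt, hρd⟩ : ∃ r, HasDerivAt ρ r t := ⟨_, by rw [hρeq]; exact hf.sqrt hne⟩
  have e1 : 2 * (x t) ^ 3 * (y t)
      = rt * Real.cos (θ t) + ρ t * (-Real.sin (θ t) * θ' t) := by
    refine hU.unique ?_
    have hUc : (fun s => (x s) ^ 2 - (y s) ^ 2 - 1)
        = fun s => ρ s * Real.cos (θ s) := by
      funext s; exact (hpolar s).1
    rw [hUc]
    exact hρd.mul (hθ t).cos
  have e2 : 2 * (y t) ^ 2 + 2 * (x t) ^ 2 - 2 * (x t) ^ 4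
      = rt * Real.sin (θ t) + ρ t * (Real.cos (θ t) * θ' t) := by
    refine hV.unique ?_
    have hVc : (fun s => 2 * x s * y s) = fun s => ρ s * Real.sin (θ s) := by
      funext s; exact (hpolar s).2
    rw [hVc]
    exact hρd.mul (hθ t).sin
  have pyth := Real.sin_sq_add_cos_sq (θ t)
  have key : Real.cos (θ t) * (2 * (y t) ^ 2 + 2 * (x t) ^ 2 - 2 * (x t) ^ 4)
      - Real.sin (θ t) * (2 * (x t) ^ 3 * (y t)) = ρ t * θ' t := by
    linear_combination Real.cos (θ t) * e2 - Real.sin (θ t) * e1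
      + ρ t * θ' t * pyth
  have hDpos : 0 < (x t) ^ 4 + 2 * (x t) ^ 2 * (y t) ^ 2 + (y t) ^ 4
      - 2 * (x t) ^ 2 + 2 * (y t) ^ 2 + 1 := by
    nlinarith [hsq t, pow_pos (hρ t) 2]
  rw [eq_div_iff hDpos.ne']
  linear_combination (-(ρ t)) * key
    - (2 * (y t) ^ 2 + 2 * (x t) ^ 2 - 2 * (x t) ^ 4) * h1
    + (2 * (x t) ^ 3 * (y t)) * h2 - θ' t * hsq t
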